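/- Let R be a rotation of the circle ℝ/ℤ with angle α ≠ 0 (mod 1). Fix t ∈ ℝ/ℤ and let K be the shortest closed arc joining t to R(t). Then for every s ∈ ℝ/ℤ, the forward R-orbit of s intersects K. -/
import Mathlib

lemma coe_int_zero' (m : ℤ) : ((m : ℝ) : AddCircle (1:ℝ)) = 0 := by
  have : ((m : ℝ) : AddCircle (1:ℝ)) = m • ((1:ℝ) : AddCircle (1:ℝ)) := by
    rw [← AddCircle.coe_zsmul]; norm_num
  rw [this, AddCircle.coe_period, smul_zero]

lemma key (a : ℝ) (ha : 0 < a) (ha2 : a ≤ 1/2) (t s : ℝ) :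
    ∃ n : ℕ, dist ((s : AddCircle (1:ℝ)) + n • ((a : ℝ) : AddCircle (1:ℝ))) (t : AddCircle (1:ℝ)) +
      dist ((s : AddCircle (1:ℝ)) + n • ((a : ℝ) : AddCircle (1:ℝ))) ((t : AddCircle (1:ℝ)) + (a : ℝ))
      = dist (t : AddCircle (1:ℝ)) ((t : AddCircle (1:ℝ)) + (a : ℝ)) := by
  set c : ℝ := t - s with hc
  set m : ℤ := ⌊-c⌋ + 1 with hm
  have hmc : 0 < (m : ℝ) + c := by
    have := Int.lt_floor_add_one (-c)
    push_cast [hm]; linarith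
  set n : ℕ := ⌈((m : ℝ) + c) / a⌉.toNat with hn
  have hpos : (0:ℤ) ≤ ⌈((m : ℝ) + c) / a⌉ := Int.ceil_nonneg (le_of_lt (div_pos hmc ha))
  have hcast : ((n : ℤ) : ℝ) = (n : ℝ) := by push_cast; ring
  have hn1 : ((m : ℝ) + c) / a ≤ n := by
    have h1 : (⌈((m : ℝ) + c) / a⌉ : ℝ) ≤ ((n:ℤ) : ℝ) := by
      exact_mod_cast Int.self_le_toNat _
    rw [hcast] at h1
    linarith [Int.le_ceil (((m : ℝ) + c) / a)]
  have hn2 : (n : ℝ) < ((m : ℝ) + c) / a + 1 := by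
    have : ((n:ℤ):ℝ) = (⌈((m : ℝ) + c) / a⌉ : ℝ) := by
      rw [hn]; norm_cast; exact Int.toNat_of_nonneg hpos
    rw [← hcast, this]
    exact Int.ceil_lt_add_one _
  set y : ℝ := s + n * a - m with hy
  have hy1 : t ≤ y := by
    have : (m : ℝ) + c ≤ n * a := by
      rw [div_le_iff₀ ha] at hn1; linarith
    simp only [hy, hc] at *; linarith
  have hy2 : y ≤ t + a := by
    have : (n : ℝ) * a < ((m : ℝ) + c) + a := by
      rw [div_add' _ _ _ (ne_of_gt ha), lt_div_iff₀ ha] at hn2; linarith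
    simp only [hy, hc] at *; linarith
  refine ⟨n, ?_⟩
  have hzero : ((-(m:ℝ) : ℝ) : AddCircle (1:ℝ)) = 0 := by
    have : (-(m:ℝ) : ℝ) = ((-m : ℤ) : ℝ) := by push_cast; ring
    rw [this, coe_int_zero']
  have hpt : (s : AddCircle (1:ℝ)) + n • ((a : ℝ) : AddCircle (1:ℝ)) = ((y : ℝ) : AddCircle (1:ℝ)) := by
    rw [hy, sub_eq_add_neg, AddCircle.coe_add, hzero, add_zero, AddCircle.coe_add,
      ← AddCircle.coe_nsmul, nsmul_eq_mul]
  rw [hpt]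
  have habs : ∀ r : ℝ, |r| ≤ 1/2 → ‖((r : ℝ) : AddCircle (1:ℝ))‖ = |r| := by
    intro r hr
    exact (AddCircle.norm_coe_eq_abs_iff 1 one_ne_zero).2 (by rw [abs_one]; linarith)
  have d1 : dist ((y:ℝ) : AddCircle (1:ℝ)) ((t:ℝ) : AddCircle (1:ℝ)) = y - t := by
    rw [dist_eq_norm, ← AddCircle.coe_sub, habs (y - t) (by rw [abs_le]; constructor <;> linarith),
      abs_of_nonneg (by linarith)]
  have d2 : dist ((y:ℝ) : AddCircle (1:ℝ)) (((t:ℝ) : AddCircle (1:ℝ)) + (a:ℝ)) = t + a - y := by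
    rw [dist_eq_norm]
    have h : ((y:ℝ) : AddCircle (1:ℝ)) - (((t:ℝ) : AddCircle (1:ℝ)) + (a:ℝ)) = ((y - (t + a) : ℝ) : AddCircle (1:ℝ)) := by
      rw [← AddCircle.coe_add, ← AddCircle.coe_sub]
    rw [h, habs _ (by rw [abs_le]; constructor <;> linarith), abs_of_nonpos (by linarith)]; ring
  have d3 : dist ((t:ℝ) : AddCircle (1:ℝ)) (((t:ℝ) : AddCircle (1:ℝ)) + (a:ℝ)) = a := by
    rw [dist_eq_norm]
    have h : ((t:ℝ) : AddCircle (1:ℝ)) - (((t:ℝ) : AddCircle (1:ℝ)) + (a:ℝ)) = ((-a : ℝ) : AddCircle (1:ℝ)) := by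
      rw [← AddCircle.coe_add, ← AddCircle.coe_sub]; norm_num
    rw [h, habs _ (by rw [abs_le]; constructor <;> linarith), abs_of_nonpos (by linarith)]; ring
  rw [d1, d2, d3]; ring

/-- Let `R` be the rotation of the circle `ℝ/ℤ` by an angle `α ≠ 0`, and let `t` be a
point. The shortest closed arc `K` joining `t` to `R t = t + α` consists of the points
`y` with `dist y t + dist y (t + α) = dist t (t + α)`. Then the forward `R`-orbit of
any point `s` meets `K`. -/
theorem rotation_orbit_meets_shortest_arc
    (α : AddCircle (1 : ℝ)) (hα : α ≠ 0) (t s : AddCircle (1 : ℝ)) :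
    ∃ n : ℕ, dist (s + n • α) t + dist (s + n • α) (t + α) = dist t (t + α) := by
  induction α using QuotientAddGroup.induction_on with | H a => ?_
  induction t using QuotientAddGroup.induction_on with | H t => ?_
  induction s using QuotientAddGroup.induction_on with | H s => ?_
  have hab : ((a : ℝ) : AddCircle (1:ℝ)) = ((Int.fract a : ℝ) : AddCircle (1:ℝ)) := by
    rw [Int.fract, AddCircle.coe_sub, coe_int_zero', sub_zero]
  set b : ℝ := Int.fract a with hbdef
  have hb0 : 0 ≤ b := Int.fract_nonneg a
  have hb1 : b < 1 := Int.fract_lt_one a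
  have hbne : b ≠ 0 := by
    intro h
    apply hα
    rw [hab, h]
    norm_num
  rw [hab]
  rcases le_or_gt b (1/2) with hhalf | hhalf
  · exact key b (lt_of_le_of_ne hb0 (Ne.symm hbne)) hhalf t s
  · obtain ⟨n, hn⟩ := key (1 - b) (by linarith) (by linarith) (-t) (-s)
    refine ⟨n, ?_⟩
    have hA : ((1 - b : ℝ) : AddCircle (1:ℝ)) = -((b : ℝ) : AddCircle (1:ℝ)) := by
      rw [AddCircle.coe_sub, AddCircle.coe_period, zero_sub]
    rw [hA, AddCircle.coe_neg, AddCircle.coe_neg, smul_neg, ← neg_add, ← neg_add,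
      dist_neg_neg, dist_neg_neg, dist_neg_neg] at hn
    convert hn using 2
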